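/- If X is a Binomial(n,p) random variable with p < 1/n, then E|X/n - p| = 2p(1-p)^n. -/

import Mathlib

open Finset

private lemma binom_sum_one (m : ℕ) (p : ℝ) :
    ∑ k ∈ range (m + 1), (m.choose k : ℝ) * p ^ k * (1 - p) ^ (m - k) = 1 := by
  have h := add_pow p (1 - p) m
  rw [add_sub_cancel, one_pow] at h
  calc ∑ k ∈ range (m + 1), (m.choose k : ℝ) * p ^ k * (1 - p) ^ (m - k)
      = ∑ k ∈ range (m + 1), p ^ k * (1 - p) ^ (m - k) * (m.choose k : ℝ) :=
        Finset.sum_congr rfl fun k _ => by ring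
    _ = 1 := h.symm

private lemma binom_mean (n : ℕ) (p : ℝ) :
    ∑ k ∈ range (n + 1), (n.choose k : ℝ) * p ^ k * (1 - p) ^ (n - k) * k
      = n * p := by
  cases n with
  | zero => simp
  | succ m =>
    rw [Finset.sum_range_succ']
    simp only [Nat.cast_zero, mul_zero, add_zero]
    have key : ∀ i ∈ range (m + 1),
        ((m + 1).choose (i + 1) : ℝ) * p ^ (i + 1) * (1 - p) ^ (m + 1 - (i + 1)) * ((i + 1 : ℕ) : ℝ)
          = ((m + 1 : ℕ) : ℝ) * p * ((m.choose i : ℝ) * p ^ i * (1 - p) ^ (m - i)) := by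
      intro i _
      have hc : ((m + 1).choose (i + 1) : ℝ) * (i + 1) = (m + 1) * (m.choose i : ℝ) := by
        have := Nat.add_one_mul_choose_eq m i
        exact_mod_cast congrArg (Nat.cast (R := ℝ)) this.symm
      have hs : m + 1 - (i + 1) = m - i := by omega
      rw [hs]
      push_cast at hc ⊢
      linear_combination (p ^ (i + 1) * (1 - p) ^ (m - i)) * hc
    rw [Finset.sum_congr rfl key, ← Finset.mul_sum, binom_sum_one]
    push_cast
    ring

/-- De Moivre's identity: for `X ~ B(n,p)` with `p < 1/n`,
the Binomial mean absolute deviation satisfies `E|X/n - p| = 2p(1-p)^n`. -/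
theorem binomial_mad_identity (n : ℕ) (p : ℝ) (hp0 : 0 ≤ p) (hp : p < 1 / n) :
    ∑ k ∈ Finset.range (n + 1),
      (n.choose k : ℝ) * p ^ k * (1 - p) ^ (n - k) * |(k : ℝ) / n - p|
      = 2 * p * (1 - p) ^ n := by
  have hn : 0 < n := by
    by_contra h
    have : n = 0 := by omega
    subst this
    simp at hp
    linarith
  have hnR : (0 : ℝ) < n := by exact_mod_cast hn
  set c : ℕ → ℝ := fun k => (n.choose k : ℝ) * p ^ k * (1 - p) ^ (n - k) with hc
  have hT : ∑ k ∈ range (n + 1), c k * ((k : ℝ) / n - p) = 0 := by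
    have h1 : ∑ k ∈ range (n + 1), c k * ((k : ℝ) / n - p)
        = (∑ k ∈ range (n + 1), c k * k) / n - p * ∑ k ∈ range (n + 1), c k := by
      rw [Finset.sum_div, Finset.mul_sum, ← Finset.sum_sub_distrib]
      exact Finset.sum_congr rfl fun k _ => by simp only [hc]; field_simp
    rw [h1, binom_mean, binom_sum_one]
    field_simp
    ring
  have habs : ∀ i ∈ range n, c (i + 1) * |((i + 1 : ℕ) : ℝ) / n - p|
      = c (i + 1) * (((i + 1 : ℕ) : ℝ) / n - p) := by
    intro i _
    congr 1
    apply abs_of_pos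
    have h1 : (1 : ℝ) / n ≤ ((i + 1 : ℕ) : ℝ) / n := by
      gcongr
      push_cast; linarith [Nat.cast_nonneg (α := ℝ) i]
    linarith
  show ∑ k ∈ Finset.range (n + 1), c k * |(k : ℝ) / n - p| = 2 * p * (1 - p) ^ n
  rw [Finset.sum_range_succ', Finset.sum_congr rfl habs]
  rw [Finset.sum_range_succ'] at hT
  have hc0 : c 0 = (1 - p) ^ n := by simp [hc]
  have habs0 : |((0 : ℕ) : ℝ) / n - p| = p := by
    rw [Nat.cast_zero, zero_div, zero_sub, abs_neg, abs_of_nonneg hp0]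
  rw [hc0, habs0]
  rw [hc0, Nat.cast_zero, zero_div, zero_sub] at hT
  linarith [hT]
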